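/- arXiv:0805.0501 — 3 statements merged into one kernel-verified Lean document; each statement's English description precedes it below -/
import Mathlib

section
/- Let d be a positive even integer. Then the smallest positive integer z such that ⌊z·(d+1)/(2z+1) − 1⌋ = d/2 − 1 is z = d/2. -/
theorem stmt_3 (d : ℕ) (hd : 0 < d) (hde : Even d) :
    IsLeast {z : ℕ | 0 < z ∧
      ⌊(z : ℝ) * ((d : ℝ) + 1) / (2 * (z : ℝ) + 1) - 1⌋ = (d : ℤ) / 2 - 1} (d / 2) := by
  obtain ⟨m, hm⟩ := hde
  have hdm : d = 2 * m := by omega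
  have hmpos : 0 < m := by omega
  subst hdm
  have hhalf : (2 * m) / 2 = m := by omega
  rw [hhalf]
  constructor
  · refine ⟨hmpos, ?_⟩
    have hden : (2 * (m : ℝ) + 1) ≠ 0 := by positivity
    have hval : (m : ℝ) * ((2 * m : ℕ) + 1) / (2 * (m : ℝ) + 1) - 1 = (m : ℝ) - 1 := by
      push_cast
      field_simp
    rw [hval]
    have : ((m : ℝ) - 1) = ((m : ℤ) - 1 : ℤ) := by push_cast; ring
    rw [this, Int.floor_intCast]
    push_cast
    omega
  · rintro z ⟨hz, hfl⟩
    by_contra h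
    push_neg at h
    have hzm : z < m := by omega
    have hlt : (z : ℝ) * ((2 * m : ℕ) + 1) / (2 * (z : ℝ) + 1) - 1 < (m : ℝ) - 1 := by
      have hden : (0 : ℝ) < 2 * (z : ℝ) + 1 := by positivity
      rw [sub_lt_sub_iff_right, div_lt_iff₀ hden]
      push_cast
      have : (z : ℝ) < m := by exact_mod_cast hzm
      nlinarith
    have hle : (⌊(z : ℝ) * ((2 * m : ℕ) + 1) / (2 * (z : ℝ) + 1) - 1⌋ : ℝ) ≤ _ :=
      Int.floor_le _
    rw [hfl] at hle
    have hml : ((2 * m : ℕ) : ℤ) / 2 - 1 = (m : ℤ) - 1 := by push_cast; omega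
    rw [hml] at hle
    push_cast at hle hlt
    linarith
end

section
/- Let d be a positive integer, ℓ ≥ 2 an integer, λ = (ℓ+1)/ℓ, and z a positive integer with λ(λ−1)^z < 2. Define b := (d − 1 + λ(λ−1)^z)/(2 − λ(λ−1)^z), a := (d+1)/(2 − λ(λ−1)^z), and T_k := b − a(λ−1)^k for k = 1,…,z. Then T_1 < T_2 < … < T_z and T_z < (d−1)/2. -/
theorem stmt_8 (d ℓ z : ℕ) (hd : 0 < d) (hℓ : 2 ≤ ℓ) (hz : 0 < z)
    (lam : ℝ) (hlam : lam = ((ℓ : ℝ) + 1) / (ℓ : ℝ))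
    (hsmall : lam * (lam - 1) ^ z < 2)
    (b a : ℝ)
    (hb : b = ((d : ℝ) - 1 + lam * (lam - 1) ^ z) / (2 - lam * (lam - 1) ^ z))
    (ha : a = ((d : ℝ) + 1) / (2 - lam * (lam - 1) ^ z))
    (T : ℕ → ℝ) (hT : ∀ k, T k = b - a * (lam - 1) ^ k) :
    (∀ k₁ k₂ : ℕ, 1 ≤ k₁ → k₁ < k₂ → k₂ ≤ z → T k₁ < T k₂) ∧
    T z < ((d : ℝ) - 1) / 2 := by
  have hℓR : (2 : ℝ) ≤ (ℓ : ℝ) := by exact_mod_cast hℓ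
  have hℓ0 : (0 : ℝ) < (ℓ : ℝ) := by linarith
  have hlam1 : 1 < lam := by
    rw [hlam, lt_div_iff₀ hℓ0]; linarith
  have hlam2 : lam < 2 := by
    rw [hlam, div_lt_iff₀ hℓ0]; linarith
  have he0 : 0 < lam - 1 := by linarith
  have he1 : lam - 1 < 1 := by linarith
  have hD : 0 < 2 - lam * (lam - 1) ^ z := by linarith
  have ha0 : 0 < a := by
    rw [ha]
    apply div_pos _ hD
    have : (1:ℝ) ≤ (d:ℝ) := by exact_mod_cast hd
    linarith
  constructor
  · intro k₁ k₂ h1 h12 h2z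
    rw [hT, hT]
    have hpow : (lam - 1) ^ k₂ < (lam - 1) ^ k₁ :=
      pow_lt_pow_right_of_lt_one₀ he0 he1 h12
    nlinarith
  · rw [hT, hb, ha]
    have hez : 0 < (lam - 1) ^ z := pow_pos he0 z
    have hlt : lam * (lam - 1) ^ z < 2 * (lam - 1) ^ z := by nlinarith
    rw [div_mul_eq_mul_div, div_sub_div_same, div_lt_div_iff₀ hD two_pos]
    have hd1 : (1:ℝ) ≤ (d:ℝ) := by exact_mod_cast hd
    nlinarith
end

section
/- Let d be a positive integer, ℓ ≥ 2, λ = (ℓ+1)/ℓ, and for positive integer z define T_z^{(z)} := b − a(λ−1)^z with b = (d−1+λ(λ−1)^z)/(2−λ(λ−1)^z) and a = (d+1)/(2−λ(λ−1)^z). Then T_z^{(z)} is nondecreasing in z and T_z^{(z)} → (d−1)/2 as z → ∞. -/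
theorem stmt_9 (d ℓ : ℕ) (hd : 0 < d) (hℓ : 2 ≤ ℓ)
    (lam : ℝ) (hlam : lam = ((ℓ : ℝ) + 1) / (ℓ : ℝ))
    (T : ℕ → ℝ)
    (hT : ∀ z, T z = ((d : ℝ) - 1 + lam * (lam - 1) ^ z) / (2 - lam * (lam - 1) ^ z) -
        (((d : ℝ) + 1) / (2 - lam * (lam - 1) ^ z)) * (lam - 1) ^ z) :
    (∀ z₁ z₂ : ℕ, 0 < z₁ → z₁ ≤ z₂ → T z₁ ≤ T z₂) ∧
    Filter.Tendsto T Filter.atTop (nhds (((d : ℝ) - 1) / 2)) := by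
  have hℓR : (2:ℝ) ≤ (ℓ:ℝ) := by exact_mod_cast hℓ
  have hℓpos : (0:ℝ) < (ℓ:ℝ) := by linarith
  set e : ℝ := 1 / (ℓ:ℝ) with he
  have he0 : 0 < e := by positivity
  have he1 : e ≤ 1/2 := by
    rw [he, div_le_div_iff₀ hℓpos (by norm_num : (0:ℝ) < 2)]; linarith
  have hlam1 : lam - 1 = e := by
    rw [hlam, he]; field_simp; ring
  have hlam_le : lam ≤ 3/2 := by linarith
  have hlam_pos : 0 < lam := by linarith
  have hx_le : ∀ z : ℕ, e ^ z ≤ 1 := fun z => pow_le_one₀ he0.le (by linarith)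
  have hx_pos : ∀ z : ℕ, 0 < e ^ z := fun z => pow_pos he0 z
  have hD : ∀ z : ℕ, 0 < 2 - lam * e ^ z := by
    intro z
    have := mul_le_of_le_one_right hlam_pos.le (hx_le z)
    linarith
  have hd1 : (1:ℝ) ≤ (d:ℝ) := by exact_mod_cast hd
  have hT' : ∀ z, T z = ((d:ℝ) - 1 + (lam - ((d:ℝ)+1)) * e ^ z) / (2 - lam * e ^ z) := by
    intro z
    rw [hT z, hlam1]
    have hDne : (2 - lam * e ^ z) ≠ 0 := (hD z).ne'
    field_simp
    ring
  constructor
  · intro z₁ z₂ _ hz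
    rw [hT' z₁, hT' z₂]
    have hxle : e ^ z₂ ≤ e ^ z₁ := pow_le_pow_of_le_one he0.le (by linarith) hz
    rw [div_le_div_iff₀ (hD z₁) (hD z₂)]
    nlinarith [mul_nonneg (sub_nonneg.2 hxle)
      (mul_nonneg (by linarith : (0:ℝ) ≤ 2 - lam) (by positivity : (0:ℝ) ≤ (d:ℝ)+1))]
  · have h1 : Filter.Tendsto (fun z : ℕ => e ^ z) Filter.atTop (nhds 0) :=
      tendsto_pow_atTop_nhds_zero_of_lt_one he0.le (by linarith)
    have hnum := Filter.Tendsto.const_add ((d:ℝ)-1) (h1.const_mul (lam - ((d:ℝ)+1)))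
    have hden := Filter.Tendsto.const_sub 2 (h1.const_mul lam)
    have h2 := hnum.div hden (by norm_num : (2:ℝ) - lam * 0 ≠ 0)
    simp only [mul_zero, add_zero, sub_zero] at h2
    exact h2.congr fun z => (hT' z).symm
end
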